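/- arXiv:q-alg/9508009 — 3 statements merged into one kernel-verified Lean document; each statement's English description precedes it below -/
import Mathlib

section
/- For N ≥ 2, the function φ_N(x) = θ_{p^N}(xp)·θ_{p^N}(xq⁻¹)·θ_{p^N}(xp⁻¹q) / (θ_{p^N}(xp⁻¹)·θ_{p^N}(xq)·θ_{p^N}(xpq⁻¹)) satisfies φ_N(x)·φ_N(xp)·⋯·φ_N(xp^{N-1}) = 1. -/
/-- θ_a(x) = ∏_{n≥0}(1 - x aⁿ) · ∏_{n≥1}(1 - x⁻¹ aⁿ) · ∏_{n≥1}(1 - aⁿ). -/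
noncomputable def theta (a x : ℂ) : ℂ :=
  (∏' n : ℕ, (1 - x * a ^ n)) * (∏' n : ℕ, (1 - x⁻¹ * a ^ (n + 1))) *
    (∏' n : ℕ, (1 - a ^ (n + 1)))

/-- φ_N(x) = θ_{p^N}(xp)·θ_{p^N}(xq⁻¹)·θ_{p^N}(xp⁻¹q) / (θ_{p^N}(xp⁻¹)·θ_{p^N}(xq)·θ_{p^N}(xpq⁻¹)) -/
noncomputable def phiN (N : ℕ) (p q x : ℂ) : ℂ :=
  theta (p ^ N) (x * p) * theta (p ^ N) (x * q⁻¹) * theta (p ^ N) (x * p⁻¹ * q) /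
    (theta (p ^ N) (x * p⁻¹) * theta (p ^ N) (x * q) * theta (p ^ N) (x * p * q⁻¹))

lemma mult_aux (a x : ℂ) (ha : ‖a‖ < 1) :
    Multipliable fun n : ℕ => 1 - x * a ^ n := by
  by_cases h0 : ∀ n : ℕ, 1 - x * a ^ n ≠ 0
  · have hlog : Summable fun n : ℕ => Complex.log (1 - x * a ^ n) := by
      have hten : Filter.Tendsto (fun n : ℕ => ‖x * a ^ n‖) Filter.atTop (nhds 0) := by
        have := (tendsto_pow_atTop_nhds_zero_of_norm_lt_one
          (x := a) (by simpa using ha)).const_mul x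
        simpa using this.norm
      have hev : ∀ᶠ n : ℕ in Filter.atTop, ‖x * a ^ n‖ ≤ 1 / 2 := by
        filter_upwards [hten.eventually_lt_const (by norm_num : (0:ℝ) < 1/2)] with n hn
        exact hn.le
      apply Summable.of_norm_bounded_eventually_nat
        (g := fun n => 3 / 2 * (‖x‖ * ‖a‖ ^ n))
        (((summable_geometric_of_lt_one (norm_nonneg a)
          (by simpa using ha)).mul_left ‖x‖).mul_left (3/2))
      filter_upwards [hev] with n hn
      have h1 : (1 : ℂ) - x * a ^ n = 1 + -(x * a ^ n) := by ring
      rw [h1]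
      have := Complex.norm_log_one_add_half_le_self (z := -(x * a ^ n)) (by simpa using hn)
      calc ‖Complex.log (1 + -(x * a ^ n))‖ ≤ 3/2 * ‖-(x * a ^ n)‖ := this
        _ = 3 / 2 * (‖x‖ * ‖a‖ ^ n) := by simp [norm_mul, norm_pow]
    exact Complex.multipliable_of_summable_log hlog
  · push_neg at h0
    obtain ⟨n0, hn0⟩ := h0
    refine ⟨0, ?_⟩
    have hev : ∀ᶠ s : Finset ℕ in Filter.atTop, ∏ i ∈ s, (1 - x * a ^ i) = 0 := by
      refine Filter.eventually_atTop.2 ⟨{n0}, fun s hs => ?_⟩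
      exact Finset.prod_eq_zero (Finset.singleton_subset_iff.mp hs) hn0
    exact Filter.Tendsto.congr' (by filter_upwards [hev] with s hs; exact hs.symm)
      tendsto_const_nhds

lemma theta_shift (a x : ℂ) (ha : ‖a‖ < 1) (ha0 : a ≠ 0) (hx : x ≠ 0) :
    theta a (x * a) = -x⁻¹ * theta a x := by
  have hP : Multipliable fun n : ℕ => 1 - x * a ^ (n + 1) :=
    (mult_aux a (x * a) ha).congr fun n => by ring
  have hQ : Multipliable fun n : ℕ => 1 - x⁻¹ * a ^ (n + 1) :=
    (mult_aux a (x⁻¹ * a) ha).congr fun n => by ring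
  have e1 : (∏' n : ℕ, (1 - (x * a) * a ^ n)) = ∏' n : ℕ, (1 - x * a ^ (n + 1)) :=
    tprod_congr fun n => by ring
  have e2 : (∏' n : ℕ, (1 - (x * a)⁻¹ * a ^ (n + 1))) = ∏' n : ℕ, (1 - x⁻¹ * a ^ n) := by
    refine tprod_congr fun n => ?_
    congr 1
    rw [mul_inv]
    field_simp
    ring
  have s1 : (∏' n : ℕ, (1 - x * a ^ n)) = (1 - x) * ∏' n : ℕ, (1 - x * a ^ (n + 1)) := by
    simpa using tprod_eq_zero_mul' (f := fun n : ℕ => 1 - x * a ^ n) hP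
  have s2 : (∏' n : ℕ, (1 - x⁻¹ * a ^ n)) = (1 - x⁻¹) * ∏' n : ℕ, (1 - x⁻¹ * a ^ (n + 1)) := by
    simpa using tprod_eq_zero_mul' (f := fun n : ℕ => 1 - x⁻¹ * a ^ n) hQ
  have hx1 : (1 : ℂ) - x⁻¹ = -x⁻¹ * (1 - x) := by field_simp; ring
  unfold theta
  rw [e1, e2, s2, s1, hx1]
  ring

/-- φ_N(x)·φ_N(xp)·⋯·φ_N(xp^{N-1}) = 1. -/
theorem phiN_functional_equation (N : ℕ) (hN : 2 ≤ N) (p q x : ℂ)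
    (hp0 : 0 < ‖p‖) (hp1 : ‖p‖ < 1) (hq : q ≠ 0) (hx : x ≠ 0)
    (hfac : ∀ k < N, ∀ c ∈ ({p, q⁻¹, p⁻¹ * q, p⁻¹, q, p * q⁻¹} : Set ℂ),
      theta (p ^ N) (x * p ^ k * c) ≠ 0) :
    ∏ k ∈ Finset.range N, phiN N p q (x * p ^ k) = 1 := by
  have hp : p ≠ 0 := by
    intro h; simp [h] at hp0
  have ha : ‖p ^ N‖ < 1 := by
    rw [norm_pow]
    exact pow_lt_one₀ (norm_nonneg p) hp1 (by omega)
  have ha0 : (p : ℂ) ^ N ≠ 0 := pow_ne_zero _ hp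
  -- shorthand
  set a : ℂ := p ^ N with ha_def
  -- pointwise rewriting of phiN
  have key : ∀ k : ℕ, phiN N p q (x * p ^ k) =
      (theta a (x * p⁻¹ * p ^ (k + 2)) * theta a (x * q⁻¹ * p ^ k) *
        theta a (x * p⁻¹ * q * p ^ k)) /
      (theta a (x * p⁻¹ * p ^ k) * theta a (x * p⁻¹ * q * p ^ (k + 1)) *
        theta a (x * q⁻¹ * p ^ (k + 1))) := by
    intro k
    simp only [phiN, ← ha_def]
    rw [show x * p ^ k * p * q⁻¹ = x * q⁻¹ * p ^ (k + 1) by ring,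
      show x * p ^ k * p = x * p⁻¹ * p ^ (k + 2) by field_simp; ring,
      show x * p ^ k * q⁻¹ = x * q⁻¹ * p ^ k by ring,
      show x * p ^ k * p⁻¹ * q = x * p⁻¹ * q * p ^ k by ring,
      show x * p ^ k * p⁻¹ = x * p⁻¹ * p ^ k by ring,
      show x * p ^ k * q = x * p⁻¹ * q * p ^ (k + 1) by field_simp; ring]
  -- nonvanishing facts
  have hnz : ∀ k < N, ∀ c ∈ ({p, q⁻¹, p⁻¹ * q, p⁻¹, q, p * q⁻¹} : Set ℂ),
      theta a (x * p ^ k * c) ≠ 0 := hfac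
  have hg1 : ∀ k < N, theta a (x * q⁻¹ * p ^ k) ≠ 0 := by
    intro k hk
    rw [show x * q⁻¹ * p ^ k = x * p ^ k * q⁻¹ by ring]
    exact hnz k hk q⁻¹ (by simp)
  have hg2 : ∀ k < N, theta a (x * p⁻¹ * q * p ^ k) ≠ 0 := by
    intro k hk
    rw [show x * p⁻¹ * q * p ^ k = x * p ^ k * (p⁻¹ * q) by ring]
    exact hnz k hk (p⁻¹ * q) (by simp)
  have hg3 : ∀ k < N, theta a (x * p⁻¹ * p ^ k) ≠ 0 := by
    intro k hk
    rw [show x * p⁻¹ * p ^ k = x * p ^ k * p⁻¹ by ring]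
    exact hnz k hk p⁻¹ (by simp)
  have hg2' : ∀ k < N, theta a (x * p⁻¹ * q * p ^ (k + 1)) ≠ 0 := by
    intro k hk
    rw [show x * p⁻¹ * q * p ^ (k + 1) = x * p ^ k * q by field_simp; ring]
    exact hnz k hk q (by simp)
  have hg1' : ∀ k < N, theta a (x * q⁻¹ * p ^ (k + 1)) ≠ 0 := by
    intro k hk
    rw [show x * q⁻¹ * p ^ (k + 1) = x * p ^ k * (p * q⁻¹) by ring]
    exact hnz k hk (p * q⁻¹) (by simp)
  -- telescoping identities
  have hT1 : (∏ k ∈ Finset.range N, theta a (x * q⁻¹ * p ^ (k + 1)))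
      = -(x * q⁻¹)⁻¹ * ∏ k ∈ Finset.range N, theta a (x * q⁻¹ * p ^ k) := by
    have E1 : (∏ k ∈ Finset.range N, theta a (x * q⁻¹ * p ^ k)) * theta a (x * q⁻¹ * p ^ N)
        = theta a (x * q⁻¹ * p ^ 0) * ∏ k ∈ Finset.range N, theta a (x * q⁻¹ * p ^ (k + 1)) := by
      rw [← Finset.prod_range_succ (fun k => theta a (x * q⁻¹ * p ^ k)) N,
        Finset.prod_range_succ']
      ring
    have hs : theta a (x * q⁻¹ * p ^ N) = -(x * q⁻¹)⁻¹ * theta a (x * q⁻¹ * p ^ 0) := by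
      have := theta_shift a (x * q⁻¹) ha ha0 (by simp [hx, hq])
      simpa [← ha_def] using this
    rw [hs] at E1
    have h0 : theta a (x * q⁻¹ * p ^ 0) ≠ 0 := hg1 0 (by omega)
    apply mul_left_cancel₀ h0
    rw [← E1]; ring
  have hT2 : (∏ k ∈ Finset.range N, theta a (x * p⁻¹ * q * p ^ (k + 1)))
      = -(x * p⁻¹ * q)⁻¹ * ∏ k ∈ Finset.range N, theta a (x * p⁻¹ * q * p ^ k) := by
    have E2 : (∏ k ∈ Finset.range N, theta a (x * p⁻¹ * q * p ^ k)) *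
          theta a (x * p⁻¹ * q * p ^ N)
        = theta a (x * p⁻¹ * q * p ^ 0) *
            ∏ k ∈ Finset.range N, theta a (x * p⁻¹ * q * p ^ (k + 1)) := by
      rw [← Finset.prod_range_succ (fun k => theta a (x * p⁻¹ * q * p ^ k)) N,
        Finset.prod_range_succ']
      ring
    have hs : theta a (x * p⁻¹ * q * p ^ N)
        = -(x * p⁻¹ * q)⁻¹ * theta a (x * p⁻¹ * q * p ^ 0) := by
      have := theta_shift a (x * p⁻¹ * q) ha ha0 (by simp [hx, hq, hp])
      simpa [← ha_def] using this
    rw [hs] at E2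
    have h0 : theta a (x * p⁻¹ * q * p ^ 0) ≠ 0 := hg2 0 (by omega)
    apply mul_left_cancel₀ h0
    rw [← E2]; ring
  have hU3 : (∏ k ∈ Finset.range N, theta a (x * p⁻¹ * p ^ (k + 2)))
      = ((x * p⁻¹)⁻¹ * (x * p⁻¹ * p)⁻¹) * ∏ k ∈ Finset.range N, theta a (x * p⁻¹ * p ^ k) := by
    have E3 : (∏ k ∈ Finset.range N, theta a (x * p⁻¹ * p ^ k)) *
          (theta a (x * p⁻¹ * p ^ N) * theta a (x * p⁻¹ * p ^ (N + 1)))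
        = (theta a (x * p⁻¹ * p ^ 0) * theta a (x * p⁻¹ * p ^ 1)) *
            ∏ k ∈ Finset.range N, theta a (x * p⁻¹ * p ^ (k + 2)) := by
      rw [← mul_assoc, ← Finset.prod_range_succ (fun k => theta a (x * p⁻¹ * p ^ k)) N,
        ← Finset.prod_range_succ (fun k => theta a (x * p⁻¹ * p ^ k)) (N + 1),
        Finset.prod_range_succ', Finset.prod_range_succ']
      ring
    have hs1 : theta a (x * p⁻¹ * p ^ N) = -(x * p⁻¹)⁻¹ * theta a (x * p⁻¹ * p ^ 0) := by
      have := theta_shift a (x * p⁻¹) ha ha0 (by simp [hx, hp])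
      simpa [← ha_def] using this
    have hs2 : theta a (x * p⁻¹ * p ^ (N + 1))
        = -(x * p⁻¹ * p)⁻¹ * theta a (x * p⁻¹ * p ^ 1) := by
      have := theta_shift a (x * p⁻¹ * p) ha ha0 (by field_simp; exact hx)
      rw [show x * p⁻¹ * p ^ (N + 1) = x * p⁻¹ * p * a by rw [ha_def]; ring,
        show x * p⁻¹ * p ^ 1 = x * p⁻¹ * p by ring]
      exact this
    rw [hs1, hs2] at E3
    have h0 : theta a (x * p⁻¹ * p ^ 0) * theta a (x * p⁻¹ * p ^ 1) ≠ 0 :=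
      mul_ne_zero (hg3 0 (by omega)) (hg3 1 (by omega))
    apply mul_left_cancel₀ h0
    rw [← E3]; ring
  -- put it together
  rw [Finset.prod_congr rfl fun k _ => key k, Finset.prod_div_distrib,
    Finset.prod_mul_distrib, Finset.prod_mul_distrib, Finset.prod_mul_distrib,
    Finset.prod_mul_distrib]
  have hBne : (∏ k ∈ Finset.range N, theta a (x * p⁻¹ * p ^ k)) *
      (∏ k ∈ Finset.range N, theta a (x * p⁻¹ * q * p ^ (k + 1))) *
      (∏ k ∈ Finset.range N, theta a (x * q⁻¹ * p ^ (k + 1))) ≠ 0 := by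
    refine mul_ne_zero (mul_ne_zero ?_ ?_) ?_ <;>
      exact Finset.prod_ne_zero_iff.mpr fun k hk => by
        first
        | exact hg3 k (Finset.mem_range.mp hk)
        | exact hg2' k (Finset.mem_range.mp hk)
        | exact hg1' k (Finset.mem_range.mp hk)
  rw [div_eq_one_iff_eq hBne, hT1, hT2, hU3]
  field_simp
end

section
/- The function ψ_{ij}(x) = (-1)^{A_{ij}-1} x^{A_{ij} - A_{ij}β - 1} · θ_q(x p^{A_{ij}/2}) / θ_q(x⁻¹ p^{A_{ij}/2}) factorizes as ψ_{ij}(x) = φ_{ij}(x)/φ_{ij}(x⁻¹), where φ_{ij}(x) = x^{-β A_{ij}/2} · θ_q(x p^{A_{ij}/2}) / θ_q(x q^{A_{ij}/2}). -/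
lemma psi_mult_aux (q z : ℂ) (hq : ‖q‖ < 1) :
    Multipliable (fun n : ℕ => 1 - z * q ^ n) := by
  by_cases hz : ∃ n : ℕ, 1 - z * q ^ n = 0
  · obtain ⟨n0, hn0⟩ := hz
    refine ⟨0, ?_⟩
    have : ∀ᶠ s : Finset ℕ in Filter.atTop, ∏ i ∈ s, (1 - z * q ^ i) = 0 := by
      filter_upwards [Filter.eventually_ge_atTop {n0}] with s hs
      exact Finset.prod_eq_zero (hs (Finset.mem_singleton_self n0)) hn0
    exact Filter.Tendsto.congr' (Filter.EventuallyEq.symm this) tendsto_const_nhds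
  · push_neg at hz
    have hsum : Summable (fun n : ℕ => Complex.log (1 - z * q ^ n)) := by
      have hgeo : Summable (fun n : ℕ => ‖z‖ * ‖q‖ ^ n) :=
        (summable_geometric_of_lt_one (by positivity) hq).mul_left _
      apply Summable.of_norm_bounded_eventually_nat
        (g := fun n => (3/2) * (‖z‖ * ‖q‖ ^ n)) (hgeo.mul_left _)
      have htend : Filter.Tendsto (fun n : ℕ => ‖z‖ * ‖q‖ ^ n)
          Filter.atTop (nhds 0) := by
        simpa using (tendsto_pow_atTop_nhds_zero_of_lt_one (by positivity) hq).const_mul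
          (‖z‖)
      filter_upwards [htend.eventually_le_const (by norm_num : (0:ℝ) < 1/2)] with n hn
      have h1 : ‖-(z * q ^ n)‖ ≤ 1/2 := by
        simpa [norm_mul, norm_pow] using hn
      calc ‖Complex.log (1 - z * q ^ n)‖ = ‖Complex.log (1 + -(z * q ^ n))‖ := by ring_nf
        _ ≤ 3/2 * ‖-(z * q ^ n)‖ := Complex.norm_log_one_add_half_le_self h1
        _ = 3/2 * (‖z‖ * ‖q‖ ^ n) := by
            simp [norm_mul, norm_pow]
    exact Complex.multipliable_of_summable_log hsum

lemma psi_peel (q z : ℂ) (hq : ‖q‖ < 1) :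
    (∏' n : ℕ, (1 - z * q ^ n)) = (1 - z) * ∏' n : ℕ, (1 - z * q ^ (n + 1)) := by
  have hm : Multipliable (fun n : ℕ => 1 - z * q ^ (n + 1)) := by
    have := psi_mult_aux q (z * q) hq
    apply this.congr
    intro n; rw [pow_succ]; ring
  have := tprod_eq_zero_mul' (f := fun n : ℕ => 1 - z * q ^ n) hm
  rw [this]
  norm_num

lemma psi_theta_reflect (q x : ℂ) (hq : ‖q‖ < 1) (hx : x ≠ 0) :
    theta q x⁻¹ = -x⁻¹ * theta q x := by
  have h1 : (1 : ℂ) - x⁻¹ = -x⁻¹ * (1 - x) := by field_simp; ring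
  unfold theta
  rw [inv_inv, psi_peel q x⁻¹ hq, psi_peel q x hq, h1]
  ring

lemma psi_theta_qp (q x : ℂ) (hq : ‖q‖ < 1) (hq0 : q ≠ 0) (hx : x ≠ 0) :
    theta q (x * q) = -x⁻¹ * theta q x := by
  have h1 : (1 : ℂ) - x⁻¹ = -x⁻¹ * (1 - x) := by field_simp; ring
  have e1 : (fun n : ℕ => 1 - x * q * q ^ n) = (fun n : ℕ => 1 - x * q ^ (n + 1)) := by
    funext n; rw [pow_succ]; ring
  have e2 : (fun n : ℕ => 1 - (x * q)⁻¹ * q ^ (n + 1)) = (fun n : ℕ => 1 - x⁻¹ * q ^ n) := by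
    funext n; rw [pow_succ, mul_inv]; field_simp
  unfold theta
  rw [tprod_congr (fun n => congrFun e1 n), tprod_congr (fun n => congrFun e2 n),
    psi_peel q x⁻¹ hq, psi_peel q x hq, h1]
  ring

lemma psi_theta_key (h q : ℂ) (hqdef : q = Complex.exp h) (hq : ‖q‖ < 1)
    (m : ℤ) (u : ℂ) :
    theta q (Complex.exp (h * m - u)) =
      (-1 : ℂ) ^ (m - 1) * Complex.exp ((m - 1) * u - h * m * (m - 1) / 2) *
        theta q (Complex.exp u) := by
  have hq0 : q ≠ 0 := hqdef ▸ Complex.exp_ne_zero h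
  have hstep : ∀ k : ℤ,
      theta q (Complex.exp (h * (k + 1) - u)) =
        -Complex.exp (-(h * k - u)) * theta q (Complex.exp (h * k - u)) := by
    intro k
    have : Complex.exp (h * (k + 1) - u) = Complex.exp (h * k - u) * q := by
      rw [hqdef, ← Complex.exp_add]; ring_nf
    rw [this, psi_theta_qp q _ hq hq0 (Complex.exp_ne_zero _), ← Complex.exp_neg]
  induction m using Int.induction_on with
  | zero =>
      simp only [Int.cast_zero, mul_zero, zero_sub, zero_mul]
      rw [show Complex.exp (-u) = (Complex.exp u)⁻¹ from Complex.exp_neg u,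
        psi_theta_reflect q _ hq (Complex.exp_ne_zero u), ← Complex.exp_neg]
      norm_num
  | succ k ih =>
      have hk := hstep (k : ℤ)
      push_cast at hk ih ⊢
      rw [hk, ih]
      have e1 : (-1 : ℂ) ^ ((k : ℤ) + 1 - 1) = -((-1 : ℂ) ^ ((k : ℤ) - 1)) := by
        rw [show (k : ℤ) + 1 - 1 = ((k : ℤ) - 1) + 1 by ring,
          zpow_add₀ (by norm_num : (-1 : ℂ) ≠ 0)]
        ring
      rw [e1]
      have hexp : Complex.exp (-(h * (k:ℂ) - u)) *
          Complex.exp (((k:ℂ) - 1) * u - h * (k:ℂ) * ((k:ℂ) - 1) / 2) =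
          Complex.exp (((k:ℂ) + 1 - 1) * u - h * ((k:ℂ) + 1) * ((k:ℂ) + 1 - 1) / 2) := by
        rw [← Complex.exp_add]; congr 1; ring
      linear_combination (-((-1 : ℂ) ^ ((k : ℤ) - 1)) * theta q (Complex.exp u)) * hexp
  | pred k ih =>
      have hk := hstep (-(k : ℤ) - 1)
      push_cast at hk ih ⊢
      rw [show (-(k:ℂ) - 1 + 1) = -(k:ℂ) by ring] at hk
      have hexp1 : Complex.exp (h * (-(k:ℂ) - 1) - u) *
          Complex.exp (-(h * (-(k:ℂ) - 1) - u)) = 1 := by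
        rw [← Complex.exp_add]; simp
      have hk' : theta q (Complex.exp (h * (-(k:ℂ) - 1) - u)) =
          -Complex.exp (h * (-(k:ℂ) - 1) - u) * theta q (Complex.exp (h * -(k:ℂ) - u)) := by
        rw [hk]
        linear_combination (-theta q (Complex.exp (h * (-(k:ℂ) - 1) - u))) * hexp1
      rw [hk', ih]
      have e1 : (-1 : ℂ) ^ (-(k : ℤ) - 1 - 1) = -((-1 : ℂ) ^ (-(k : ℤ) - 1)) := by
        rw [show -(k : ℤ) - 1 - 1 = (-(k : ℤ) - 1) + (-1) by ring,
          zpow_add₀ (by norm_num : (-1 : ℂ) ≠ 0)]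
        norm_num
      rw [e1]
      have hexp : Complex.exp (h * (-(k:ℂ) - 1) - u) *
          Complex.exp ((-(k:ℂ) - 1) * u - h * -(k:ℂ) * (-(k:ℂ) - 1) / 2) =
          Complex.exp ((-(k:ℂ) - 1 - 1) * u - h * (-(k:ℂ) - 1) * (-(k:ℂ) - 1 - 1) / 2) := by
        rw [← Complex.exp_add]; congr 1; ring
      linear_combination (-((-1 : ℂ) ^ (-(k : ℤ) - 1)) * theta q (Complex.exp u)) * hexp

/-- ψ_{ij}(x) = (-1)^{A-1} x^{A-Aβ-1} θ_q(xp^{A/2})/θ_q(x⁻¹p^{A/2}) factorizes as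
φ_{ij}(x)/φ_{ij}(x⁻¹) with φ_{ij}(x) = x^{-βA/2} θ_q(xp^{A/2})/θ_q(xq^{A/2}).
Here q = e^h, p = e^{h(1-β)}, p^{A/2} = e^{h(1-β)A/2}, q^{A/2} = e^{hA/2}, and the powers
of x are taken via a fixed branch ℓ of the logarithm of x (so x^c = exp(c·ℓ) and
(x⁻¹)^c = exp(c·(-ℓ))). -/
theorem psi_factorization (h β q p : ℂ) (hqdef : q = Complex.exp h)
    (hpdef : p = Complex.exp (h * (1 - β)))
    (hq0 : 0 < ‖q‖) (hq1 : ‖q‖ < 1)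
    (A : ℤ) (x ℓ : ℂ) (hℓ : Complex.exp ℓ = x)
    (pA qA : ℂ) (hpA : pA = Complex.exp (h * (1 - β) * (A : ℂ) / 2))
    (hqA : qA = Complex.exp (h * (A : ℂ) / 2))
    (hd1 : theta q (x⁻¹ * pA) ≠ 0) (hd2 : theta q (x * qA) ≠ 0)
    (hd3 : theta q (x⁻¹ * qA) ≠ 0) :
    (-1 : ℂ) ^ (A - 1) * Complex.exp (((A : ℂ) - (A : ℂ) * β - 1) * ℓ) *
        theta q (x * pA) / theta q (x⁻¹ * pA) =
      (Complex.exp (-(β * (A : ℂ)) / 2 * ℓ) * theta q (x * pA) / theta q (x * qA)) /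
        (Complex.exp (-(β * (A : ℂ)) / 2 * (-ℓ)) * theta q (x⁻¹ * pA) /
          theta q (x⁻¹ * qA)) := by
  have hxq : x * qA = Complex.exp (ℓ + h * (A : ℂ) / 2) := by
    rw [Complex.exp_add, hℓ, hqA]
  have hxiq : x⁻¹ * qA = Complex.exp (h * (A : ℂ) - (ℓ + h * (A : ℂ) / 2)) := by
    rw [← hℓ, ← Complex.exp_neg, hqA, ← Complex.exp_add]
    congr 1; ring
  have hrel : theta q (x⁻¹ * qA) =
      (-1 : ℂ) ^ (A - 1) * Complex.exp (((A : ℂ) - 1) * ℓ) * theta q (x * qA) := by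
    rw [hxiq, hxq, psi_theta_key h q hqdef hq1 A (ℓ + h * (A : ℂ) / 2)]
    congr 2
    congr 1; ring
  rw [hrel]
  field_simp
  have hne1 : theta q (pA / x) ≠ 0 := by
    rw [show pA / x = x⁻¹ * pA by ring]; exact hd1
  rw [div_eq_div_iff (by exact hne1) hne1]
  have hEE : Complex.exp (((A : ℂ) * (1 - β) - 1) * ℓ) *
      Complex.exp ((A : ℂ) * β * ℓ / 2) =
      Complex.exp (-((A : ℂ) * β * ℓ / 2)) * Complex.exp (ℓ * ((A : ℂ) - 1)) := by
    rw [← Complex.exp_add, ← Complex.exp_add]; congr 1; ring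
  linear_combination (theta q (x * pA) * theta q (pA / x)) * hEE
end

section
/- The generating function f(x) = exp(∑_{m≥1} (1/m)·(1-q^m)(1-(p/q)^m)/(1+p^m)·x^m) (for |x| small, |p| < 1) coincides with f_{1,2}(x) = (x|q,pq⁻¹,p²;p²)_∞/(x|1,pq,p²q⁻¹;p²)_∞. -/
/-- (x|c;t)_∞ = ∏_{n≥0}(1 - c x tⁿ), a single factor of the basic hypergeometric symbol. -/
noncomputable def ipo (c t x : ℂ) : ℂ := ∏' n : ℕ, (1 - c * x * t ^ n)

/-- f_{1,2}(x) = (x|q,pq⁻¹,p²;p²)_∞ / (x|1,pq,p²q⁻¹;p²)_∞. -/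
noncomputable def f12 (p q x : ℂ) : ℂ :=
  ipo q (p ^ 2) x * ipo (p * q⁻¹) (p ^ 2) x * ipo (p ^ 2) (p ^ 2) x /
    (ipo 1 (p ^ 2) x * ipo (p * q) (p ^ 2) x * ipo (p ^ 2 * q⁻¹) (p ^ 2) x)

open Complex

set_option maxHeartbeats 1000000

private lemma summable_F {c t x : ℂ} (ht : ‖t‖ < 1) (hcx : ‖c * x‖ < 1) :
    Summable (fun nm : ℕ × ℕ => -((c * x * t ^ nm.1) ^ (nm.2 + 1) / ((nm.2 : ℂ) + 1))) := by
  have h0t : (0:ℝ) ≤ ‖t‖ := norm_nonneg _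
  have h0cx : (0:ℝ) ≤ ‖c * x‖ := norm_nonneg _
  have hg : Summable (fun m : ℕ => ‖c * x‖ ^ (m + 1)) := by
    have := (summable_geometric_of_lt_one h0cx hcx).mul_left ‖c * x‖
    exact this.congr fun m => (pow_succ' _ _).symm
  have hmaj : Summable (fun nm : ℕ × ℕ => ‖t‖ ^ nm.1 * ‖c * x‖ ^ (nm.2 + 1)) :=
    Summable.mul_of_nonneg (f := fun n : ℕ => ‖t‖ ^ n) (g := fun m : ℕ => ‖c * x‖ ^ (m + 1))
      (summable_geometric_of_lt_one h0t ht) hg (fun n => by positivity) (fun m => by positivity)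
  refine Summable.of_norm_bounded hmaj ?_
  rintro ⟨n, m⟩
  have key : ‖-((c * x * t ^ n) ^ (m + 1) / ((m : ℂ) + 1))‖
      = ‖c * x * t ^ n‖ ^ (m + 1) / ((m : ℝ) + 1) := by
    rw [norm_neg, norm_div, norm_pow]
    congr 1
    rw [show ((m : ℂ) + 1) = ((m + 1 : ℕ) : ℂ) by push_cast; ring, Complex.norm_natCast]
    push_cast; ring
  rw [key]
  have h1 : ‖c * x * t ^ n‖ ^ (m + 1) / ((m : ℝ) + 1) ≤ ‖c * x * t ^ n‖ ^ (m + 1) := by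
    apply div_le_self (by positivity); linarith [Nat.cast_nonneg (α := ℝ) m]
  refine h1.trans ?_
  rw [norm_mul, norm_pow, mul_pow, ← pow_mul, mul_comm (‖t‖ ^ n) _]
  exact mul_le_mul_of_nonneg_left
    (pow_le_pow_of_le_one h0t ht.le (Nat.le_mul_of_pos_right n (Nat.succ_pos m)))
    (by positivity)

private lemma hasSum_log_ipo {c t x : ℂ} (ht : ‖t‖ < 1) (hcx : ‖c * x‖ < 1) :
    HasSum (fun n : ℕ => Complex.log (1 - c * x * t ^ n))
      (∑' m : ℕ, -((c * x) ^ (m + 1) / ((m : ℂ) + 1) * (1 - t ^ (m + 1))⁻¹)) := by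
  have h0t : (0:ℝ) ≤ ‖t‖ := norm_nonneg _
  have hz : ∀ n : ℕ, ‖c * x * t ^ n‖ < 1 := by
    intro n
    rw [norm_mul, norm_pow]
    calc ‖c * x‖ * ‖t‖ ^ n ≤ ‖c * x‖ * 1 :=
          mul_le_mul_of_nonneg_left (pow_le_one₀ h0t ht.le) (norm_nonneg _)
      _ = ‖c * x‖ := mul_one _
      _ < 1 := hcx
  have htM : ∀ m : ℕ, ‖t ^ (m + 1)‖ < 1 := by
    intro m; rw [norm_pow]; exact pow_lt_one₀ h0t ht m.succ_ne_zero
  set f : ℕ → ℕ → ℂ := fun n m => -((c * x * t ^ n) ^ (m + 1) / ((m : ℂ) + 1)) with hf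
  have hFs : Summable (Function.uncurry f) := summable_F ht hcx
  have hfib : ∀ n : ℕ, HasSum (f n) (Complex.log (1 - c * x * t ^ n)) := by
    intro n
    have h := (hasSum_taylorSeries_neg_log (hz n)).neg
    rw [neg_neg] at h
    have h2 := (hasSum_nat_add_iff'
      (f := fun k : ℕ => -((c * x * t ^ n) ^ k / (k : ℂ))) 1).mpr h
    simp only [Finset.range_one, Finset.sum_singleton, Nat.cast_zero, div_zero, neg_zero,
      sub_zero] at h2
    refine h2.congr_fun fun m => ?_
    simp only [hf]; push_cast; ring_nf
  have hrow : ∀ m : ℕ, HasSum (fun n => f n m)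
      (-((c * x) ^ (m + 1) / ((m : ℂ) + 1) * (1 - t ^ (m + 1))⁻¹)) := by
    intro m
    have hg : HasSum (fun n : ℕ => (t ^ (m + 1)) ^ n) (1 - t ^ (m + 1))⁻¹ :=
      hasSum_geometric_of_norm_lt_one (htM m)
    have h2 := hg.mul_left (-((c * x) ^ (m + 1) / ((m : ℂ) + 1)))
    rw [neg_mul] at h2
    refine h2.congr_fun fun n => ?_
    simp only [hf]
    rw [mul_pow, ← pow_mul, ← pow_mul, mul_comm n (m+1)]
    ring
  have hcol : ∀ n : ℕ, Summable (f n) := fun n => (hfib n).summable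
  have hswap : ∑' (m : ℕ) (n : ℕ), f n m = ∑' (n : ℕ) (m : ℕ), f n m :=
    Summable.tsum_comm' hFs hcol (fun m => (hrow m).summable)
  have hmain : HasSum (fun n : ℕ => Complex.log (1 - c * x * t ^ n))
      (∑' nm : ℕ × ℕ, Function.uncurry f nm) :=
    hFs.hasSum.prod_fiberwise hfib
  have hval : (∑' nm : ℕ × ℕ, Function.uncurry f nm)
      = ∑' m : ℕ, -((c * x) ^ (m + 1) / ((m : ℂ) + 1) * (1 - t ^ (m + 1))⁻¹) := by
    rw [Summable.tsum_prod' hFs hcol]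
    simp only [Function.uncurry_apply_pair]
    rw [← hswap]
    exact tsum_congr fun m => (hrow m).tsum_eq
  rwa [hval] at hmain

private lemma ipo_eq_exp {c t x : ℂ} (ht : ‖t‖ < 1) (hcx : ‖c * x‖ < 1) :
    ipo c t x = Complex.exp
      (∑' m : ℕ, -((c * x) ^ (m + 1) / ((m : ℂ) + 1) * (1 - t ^ (m + 1))⁻¹)) := by
  have h0t : (0:ℝ) ≤ ‖t‖ := norm_nonneg _
  have hz : ∀ n : ℕ, ‖c * x * t ^ n‖ < 1 := by
    intro n
    rw [norm_mul, norm_pow]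
    calc ‖c * x‖ * ‖t‖ ^ n ≤ ‖c * x‖ * 1 :=
          mul_le_mul_of_nonneg_left (pow_le_one₀ h0t ht.le) (norm_nonneg _)
      _ = ‖c * x‖ := mul_one _
      _ < 1 := hcx
  have hne : ∀ n : ℕ, (1 : ℂ) - c * x * t ^ n ≠ 0 := by
    intro n h
    have h1 : (1:ℂ) = c * x * t ^ n := by linear_combination h
    have h2 : ‖(1:ℂ)‖ = ‖c * x * t ^ n‖ := by rw [← h1]
    simp only [norm_one] at h2
    linarith [hz n]
  have hlog := hasSum_log_ipo (c := c) ht hcx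
  have h2 : HasProd (fun n : ℕ => 1 - c * x * t ^ n)
      (Complex.exp (∑' m : ℕ, -((c * x) ^ (m + 1) / ((m : ℂ) + 1) * (1 - t ^ (m + 1))⁻¹))) := by
    refine hlog.cexp.congr_fun fun n => ?_
    simp only [Function.comp_apply]
    exact (Complex.exp_log (hne n)).symm
  exact h2.tprod_eq

private lemma summable_T {c t x : ℂ} (ht : ‖t‖ < 1) (hcx : ‖c * x‖ < 1) :
    Summable (fun m : ℕ => -((c * x) ^ (m + 1) / ((m : ℂ) + 1) * (1 - t ^ (m + 1))⁻¹)) := by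
  have h0t : (0:ℝ) ≤ ‖t‖ := norm_nonneg _
  have h0cx : (0:ℝ) ≤ ‖c * x‖ := norm_nonneg _
  have hbpos : (0:ℝ) < 1 - ‖t‖ := by linarith
  have hmaj : Summable (fun m : ℕ => ‖c * x‖ ^ (m + 1) * (1 - ‖t‖)⁻¹) := by
    have := ((summable_geometric_of_lt_one h0cx hcx).mul_left ‖c * x‖).mul_right (1 - ‖t‖)⁻¹
    exact this.congr fun m => by rw [← pow_succ']
  refine Summable.of_norm_bounded hmaj ?_
  intro m
  have hb : 1 - ‖t‖ ≤ ‖1 - t ^ (m + 1)‖ := by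
    have h1 : ‖t ^ (m+1)‖ ≤ ‖t‖ := by
      rw [norm_pow]
      calc ‖t‖ ^ (m+1) ≤ ‖t‖ ^ 1 := pow_le_pow_of_le_one h0t ht.le (by omega)
        _ = ‖t‖ := pow_one _
    have h2 := norm_sub_norm_le (1:ℂ) (t ^ (m+1))
    simp only [norm_one] at h2
    linarith
  have hd : (1:ℝ) ≤ ‖((m:ℂ) + 1)‖ := by
    rw [show ((m : ℂ) + 1) = ((m + 1 : ℕ) : ℂ) by push_cast; ring, Complex.norm_natCast]
    exact_mod_cast Nat.one_le_iff_ne_zero.mpr m.succ_ne_zero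
  rw [norm_neg, norm_mul, norm_div, norm_pow, norm_inv]
  have hinv : ‖1 - t ^ (m+1)‖⁻¹ ≤ (1 - ‖t‖)⁻¹ := by
    apply inv_anti₀ hbpos hb
  have hA : ‖c * x‖ ^ (m+1) / ‖(m:ℂ) + 1‖ ≤ ‖c * x‖ ^ (m+1) := by
    apply div_le_self (by positivity) hd
  exact mul_le_mul hA hinv (by positivity) (by positivity)

/-- The generating function f(x) = exp(∑_{m≥1} (1/m)·(1-q^m)(1-(p/q)^m)/(1+p^m)·x^m)
coincides with f_{1,2}(x) = (x|q,pq⁻¹,p²;p²)_∞/(x|1,pq,p²q⁻¹;p²)_∞. -/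
theorem generating_function_eq_f12 (p q x : ℂ) (hp0 : 0 < ‖p‖)
    (hp1 : ‖p‖ < 1) (hq : q ≠ 0)
    (hx1 : ‖x‖ < 1) (hx2 : ‖x * q‖ < 1)
    (hx3 : ‖x * p / q‖ < 1)
    (hden : ipo 1 (p ^ 2) x * ipo (p * q) (p ^ 2) x * ipo (p ^ 2 * q⁻¹) (p ^ 2) x ≠ 0) :
    Complex.exp (∑' m : ℕ,
        1 / ((m : ℂ) + 1) *
          ((1 - q ^ (m + 1)) * (1 - (p / q) ^ (m + 1)) / (1 + p ^ (m + 1))) * x ^ (m + 1)) =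
      f12 p q x := by
  have hp1' : ‖p‖ < 1 := by exact hp1
  have hx1' : ‖x‖ < 1 := by exact hx1
  have hx2' : ‖x * q‖ < 1 := by exact hx2
  have hx3' : ‖x * p / q‖ < 1 := by exact hx3
  have h0p : (0:ℝ) ≤ ‖p‖ := norm_nonneg _
  have h0x : (0:ℝ) ≤ ‖x‖ := norm_nonneg _
  have ht : ‖p ^ 2‖ < 1 := by
    rw [norm_pow]; nlinarith
  -- the six |c·x| < 1 conditions
  have hcq : ‖q * x‖ < 1 := by rwa [mul_comm x q] at hx2'
  have hcpq' : ‖p * q⁻¹ * x‖ < 1 := by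
    have he : p * q⁻¹ * x = x * p / q := by ring
    rwa [he]
  have hcp2 : ‖p ^ 2 * x‖ < 1 := by
    rw [norm_mul, norm_pow]; nlinarith
  have hc1 : ‖(1:ℂ) * x‖ < 1 := by rwa [one_mul]
  have hcpq : ‖p * q * x‖ < 1 := by
    have he : p * q * x = p * (x * q) := by ring
    rw [he, norm_mul]
    nlinarith [norm_nonneg (x * q)]
  have hcp2q : ‖p ^ 2 * q⁻¹ * x‖ < 1 := by
    have he : p ^ 2 * q⁻¹ * x = p * (x * p / q) := by ring
    rw [he, norm_mul]
    nlinarith [norm_nonneg (x * p / q)]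
  -- abbreviation for the m-th term of log ipo
  set T : ℂ → ℕ → ℂ :=
    fun c m => -((c * x) ^ (m + 1) / ((m : ℂ) + 1) * (1 - (p ^ 2) ^ (m + 1))⁻¹) with hT
  have s_q := summable_T ht hcq
  have s_pq' := summable_T ht hcpq'
  have s_p2 := summable_T ht hcp2
  have s_1 := summable_T ht hc1
  have s_pq := summable_T ht hcpq
  have s_p2q := summable_T ht hcp2q
  have key : (∑' m : ℕ,
        1 / ((m : ℂ) + 1) *
          ((1 - q ^ (m + 1)) * (1 - (p / q) ^ (m + 1)) / (1 + p ^ (m + 1))) * x ^ (m + 1))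
      = (∑' m, T q m) + (∑' m, T (p * q⁻¹) m) + (∑' m, T (p ^ 2) m)
        - ((∑' m, T 1 m) + (∑' m, T (p * q) m) + (∑' m, T (p ^ 2 * q⁻¹) m)) := by
    rw [← Summable.tsum_add s_q s_pq', ← Summable.tsum_add (s_q.add s_pq') s_p2,
      ← Summable.tsum_add s_1 s_pq, ← Summable.tsum_add (s_1.add s_pq) s_p2q,
      ← Summable.tsum_sub ((s_q.add s_pq').add s_p2) ((s_1.add s_pq).add s_p2q)]
    refine tsum_congr fun m => ?_
    have hM : ((m : ℂ) + 1) ≠ 0 := Nat.cast_add_one_ne_zero m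
    have hpM : ‖p ^ (m + 1)‖ < 1 := by
      rw [norm_pow]; exact pow_lt_one₀ h0p hp1' m.succ_ne_zero
    have hplus : (1:ℂ) + p ^ (m + 1) ≠ 0 := by
      intro h
      have h1 : p ^ (m + 1) = -1 := by linear_combination h
      rw [h1] at hpM; simp at hpM
    have hminus : (1:ℂ) - p ^ (m + 1) ≠ 0 := by
      intro h
      have h1 : p ^ (m + 1) = 1 := by linear_combination -h
      rw [h1] at hpM; simp at hpM
    have hpow : (p ^ 2) ^ (m + 1) = (p ^ (m + 1)) ^ 2 := pow_right_comm p 2 (m + 1)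
    have hfac : (1:ℂ) - (p ^ (m + 1)) ^ 2 = (1 - p ^ (m + 1)) * (1 + p ^ (m + 1)) := by ring
    have hbq : q ^ (m + 1) ≠ 0 := pow_ne_zero _ hq
    simp only [hT, hpow, hfac, mul_pow, div_pow, inv_pow, one_mul]
    generalize p ^ (m + 1) = a at hplus hminus ⊢
    generalize q ^ (m + 1) = b at hbq ⊢
    generalize x ^ (m + 1) = X
    generalize ((m : ℂ) + 1) = Mc at hM
    have F : (1 - b) * (1 - a / b) / (1 + a)
        = (1 - b - a / b + a * b + a ^ 2 / b - a ^ 2) * ((1 - a) * (1 + a))⁻¹ := by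
      rw [← div_eq_mul_inv, div_eq_div_iff hplus (mul_ne_zero hminus hplus)]
      field_simp
      ring
    rw [F]
    ring
  rw [key, f12, ipo_eq_exp ht hcq, ipo_eq_exp ht hcpq', ipo_eq_exp ht hcp2,
    ipo_eq_exp ht hc1, ipo_eq_exp ht hcpq, ipo_eq_exp ht hcp2q,
    ← Complex.exp_add, ← Complex.exp_add, ← Complex.exp_add, ← Complex.exp_add,
    ← Complex.exp_sub]
end
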